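/- Let d ≥ 3 and let G be a finite simple graph of maximum degree at most d. Let H be a subgraph of G that is bipartite with parts U and V such that every vertex of U has degree d−1 in H and every vertex of V has degree 2 in H. Suppose the spanning subgraph of G with edge set E(G) \ E(H) is a forest, each of whose connected components contains at most one vertex of U ∪ V. Then every complex eigenvalue λ of the nonbacktracking matrix B_G satisfies |λ| ≤ √(d−1). -/

import Mathlib

open Matrix
open scoped Classical

/-- The nonbacktracking matrix of a simple graph `G`, indexed by directed edges
(ordered pairs of adjacent vertices), with entries in a semiring `α`:
`B[(u,v),(w,x)] = 1` iff `v = w` and `u ≠ x`. -/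
noncomputable def nonbacktrackingMatrix {V : Type*} (G : SimpleGraph V) (α : Type*)
    [Zero α] [One α] :
    Matrix {e : V × V // G.Adj e.1 e.2} {e : V × V // G.Adj e.1 e.2} α :=
  fun e f => if (e : V × V).2 = (f : V × V).1 ∧ (e : V × V).1 ≠ (f : V × V).2 then 1 else 0

open SimpleGraph
lemma dist_lt_of_mem_support {W : Type*} {F : SimpleGraph W} {u r y : W}
    (p : F.Walk u r) (hy : y ∈ p.support) (hne : y ≠ u) :
    F.dist y r + 1 ≤ p.length := by
  have h1 : F.dist y r ≤ (p.dropUntil y hy).length := F.dist_le _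
  have h2 := congr_arg SimpleGraph.Walk.length (p.take_spec hy)
  rw [SimpleGraph.Walk.length_append] at h2
  have h3 : (p.takeUntil y hy).length ≠ 0 := fun h0 =>
    hne (SimpleGraph.Walk.eq_of_length_eq_zero h0).symm
  omega

lemma forest_step {W : Type*} {F : SimpleGraph W} (hac : F.IsAcyclic) {u v r : W}
    (h : F.Adj u v) (hr : F.Reachable u r) :
    F.dist v r = F.dist u r + 1 ∨ F.dist u r = F.dist v r + 1 := by
  have haux : ∀ a b : W, F.Adj a b → F.Reachable a r → F.dist a r ≤ F.dist b r →
      F.dist b r = F.dist a r + 1 := by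
    intro a b hab har hle
    obtain ⟨p, hp, hlen⟩ := har.exists_path_of_dist
    by_cases hmem : b ∈ p.support
    · have := dist_lt_of_mem_support p hmem hab.ne'
      omega
    · have hWpath : (SimpleGraph.Walk.cons hab.symm p).IsPath := hp.cons hmem
      have hbr : F.Reachable b r := (hab.symm.reachable).trans har
      obtain ⟨q, hq, hqlen⟩ := hbr.exists_path_of_dist
      have heq := hac.path_unique ⟨SimpleGraph.Walk.cons hab.symm p, hWpath⟩ ⟨q, hq⟩
      have hl := congr_arg (fun z : F.Path b r => z.1.length) heq
      simp only [SimpleGraph.Walk.length_cons] at hl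
      omega
  rcases le_total (F.dist u r) (F.dist v r) with hle | hle
  · exact Or.inl (haux u v h hr hle)
  · exact Or.inr (haux v u h.symm ((h.symm.reachable).trans hr) hle)

lemma forest_parent_unique {W : Type*} {F : SimpleGraph W} (hac : F.IsAcyclic) {v r x y : W}
    (hvx : F.Adj v x) (hvy : F.Adj v y)
    (hxr : F.Reachable x r) (hyr : F.Reachable y r)
    (hdx : F.dist x r + 1 = F.dist v r) (hdy : F.dist y r + 1 = F.dist v r) :
    x = y := by
  obtain ⟨p, hp, hplen⟩ := hxr.exists_path_of_dist
  obtain ⟨q, hq, hqlen⟩ := hyr.exists_path_of_dist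
  have hvp : v ∉ p.support := by
    intro hmem
    have h1 : F.dist v r ≤ (p.dropUntil v hmem).length := F.dist_le _
    have h2 := SimpleGraph.Walk.length_dropUntil_le p hmem
    omega
  have hvq : v ∉ q.support := by
    intro hmem
    have h1 : F.dist v r ≤ (q.dropUntil v hmem).length := F.dist_le _
    have h2 := SimpleGraph.Walk.length_dropUntil_le q hmem
    omega
  have hP : (SimpleGraph.Walk.cons hvx p).IsPath := hp.cons hvp
  have hQ : (SimpleGraph.Walk.cons hvy q).IsPath := hq.cons hvq
  have heq := hac.path_unique ⟨SimpleGraph.Walk.cons hvx p, hP⟩ ⟨SimpleGraph.Walk.cons hvy q, hQ⟩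
  have hsup := congr_arg (fun z : F.Path v r => z.1.support) heq
  simp only [SimpleGraph.Walk.support_cons] at hsup
  have hx2 : p.support.head? = q.support.head? := by
    have := congr_arg List.tail hsup
    simpa using congr_arg List.head? this
  rw [p.support_eq_cons, q.support_eq_cons] at hx2
  exact Option.some.inj hx2

lemma linf_eig_bound {E : Type*} [Fintype E] (M : Matrix E E ℂ) (w : E → ℝ)
    (hw : ∀ e, 0 < w e) (c : ℝ)
    (hrow : ∀ e, ∑ f, ‖M e f‖ * w f ≤ c * w e)
    (lam : ℂ) (x : E → ℂ) (hx : x ≠ 0) (heig : M *ᵥ x = lam • x) :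
    ‖lam‖ ≤ c := by
  have hne : Nonempty E := by
    by_contra h
    exact hx (funext fun e => absurd ⟨e⟩ h)
  obtain ⟨e0, -, he0⟩ := Finset.exists_max_image Finset.univ
    (fun e => ‖x e‖ / w e) ⟨Classical.arbitrary E, Finset.mem_univ _⟩
  set g : ℝ := ‖x e0‖ / w e0 with hg
  have hge : ∀ e, ‖x e‖ ≤ g * w e := by
    intro e
    have h1 := he0 e (Finset.mem_univ e)
    rw [div_le_div_iff₀ (hw e) (hw e0)] at h1
    rw [hg, div_mul_eq_mul_div, le_div_iff₀ (hw e0)]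
    linarith [h1]
  have hx0 : ∃ e, x e ≠ 0 := by
    by_contra h
    push_neg at h
    exact hx (funext h)
  obtain ⟨e1, he1⟩ := hx0
  have hgpos : 0 < g := by
    have h1 := he0 e1 (Finset.mem_univ e1)
    have : 0 < ‖x e1‖ / w e1 :=
      div_pos (by simpa using he1) (hw e1)
    exact lt_of_lt_of_le this h1
  have hxe0 : ‖x e0‖ = g * w e0 := by
    rw [hg, div_mul_cancel₀]
    exact (hw e0).ne'
  have hxe0pos : 0 < ‖x e0‖ := by
    rw [hxe0]; exact mul_pos hgpos (hw e0)
  have key : ‖lam‖ * ‖x e0‖ ≤ c * ‖x e0‖ := by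
    have h1 : ‖lam‖ * ‖x e0‖ = ‖(M *ᵥ x) e0‖ := by
      rw [heig]; simp [norm_smul]
    rw [h1]
    have h2 : ‖(M *ᵥ x) e0‖ ≤ ∑ f, ‖M e0 f‖ * ‖x f‖ := by
      simpa [mulVec, dotProduct, norm_mul] using
        (norm_sum_le Finset.univ (fun f => M e0 f * x f))
    refine h2.trans ?_
    have h3 : ∑ f, ‖M e0 f‖ * ‖x f‖
        ≤ ∑ f, ‖M e0 f‖ * (g * w f) := by
      refine Finset.sum_le_sum fun f _ => ?_
      exact mul_le_mul_of_nonneg_left (hge f) (norm_nonneg _)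
    refine h3.trans ?_
    have h4 : ∑ f, ‖M e0 f‖ * (g * w f) = g * ∑ f, ‖M e0 f‖ * w f := by
      rw [Finset.mul_sum]; congr 1; ext f; ring
    rw [h4, hxe0]
    calc g * ∑ f, ‖M e0 f‖ * w f ≤ g * (c * w e0) := by
          exact mul_le_mul_of_nonneg_left (hrow e0) hgpos.le
      _ = c * (g * w e0) := by ring
  exact le_of_mul_le_mul_right (by simpa [mul_comm] using key) hxe0pos

lemma nb_row_sum {W : Type*} [Fintype W] (G : SimpleGraph W) (w : W → W → ℝ)
    (e : {e : W × W // G.Adj e.1 e.2}) :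
    ∑ f : {e : W × W // G.Adj e.1 e.2},
        ‖(nonbacktrackingMatrix G ℂ) e f‖ * w (f : W × W).1 (f : W × W).2
      = ∑ x ∈ (G.neighborFinset (e : W × W).2).erase (e : W × W).1, w (e : W × W).2 x := by
  have h1 : ∀ f : {e : W × W // G.Adj e.1 e.2},
      ‖(nonbacktrackingMatrix G ℂ) e f‖ * w (f : W × W).1 (f : W × W).2
      = if ((e : W × W).2 = (f : W × W).1 ∧ (e : W × W).1 ≠ (f : W × W).2)
          then w (f : W × W).1 (f : W × W).2 else 0 := by
    intro f
    by_cases hc : ((e : W × W).2 = (f : W × W).1 ∧ (e : W × W).1 ≠ (f : W × W).2) <;>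
      simp [nonbacktrackingMatrix, hc]
  rw [Finset.sum_congr rfl (fun f _ => h1 f), ← Finset.sum_filter]
  refine Finset.sum_bij'
    (i := fun (f : {e : W × W // G.Adj e.1 e.2}) _ => (f : W × W).2)
    (j := fun x hx => ⟨((e : W × W).2, x), by
      have := Finset.mem_of_mem_erase hx
      rwa [SimpleGraph.mem_neighborFinset] at this⟩)
    ?_ ?_ ?_ ?_ ?_
  · intro f hf
    simp only [Finset.mem_filter, Finset.mem_univ, true_and] at hf
    have hadj : G.Adj (e : W × W).2 (f : W × W).2 := by
      have := f.2; rwa [← hf.1] at this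
    exact Finset.mem_erase.mpr ⟨fun hh => hf.2 hh.symm,
      (SimpleGraph.mem_neighborFinset _ _ _).mpr hadj⟩
  · intro x hx
    rw [Finset.mem_erase] at hx
    exact Finset.mem_filter.mpr ⟨Finset.mem_univ _, rfl, fun hh => hx.1 hh.symm⟩
  · intro f hf
    simp only [Finset.mem_filter, Finset.mem_univ, true_and] at hf
    ext <;> simp [← hf.1]
  · intro x hx
    rfl
  · intro f hf
    simp only [Finset.mem_filter, Finset.mem_univ, true_and] at hf
    rw [← hf.1]


set_option maxHeartbeats 1600000 in
/-- Let `G` be a finite graph of maximum degree at most `d ≥ 3`, and `H ≤ G` a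
`(2, d-1)`-biregular subgraph with parts `U` (degrees `d-1`) and `V` (degrees `2`).
If the spanning subgraph of `G` with edge set `E(G) \ E(H)` is a forest, each of
whose connected components contains at most one vertex of `U ∪ V`, then every
complex eigenvalue of the nonbacktracking matrix of `G` has absolute value at most
`√(d-1)`. -/
theorem stmt_12 {W : Type*} [Fintype W] (d : ℕ) (hd : 3 ≤ d)
    (G H : SimpleGraph W) (hsub : H ≤ G)
    (hmaxdeg : ∀ v : W, G.degree v ≤ d)
    (U V : Set W) (hUV : Disjoint U V)
    (hbip : ∀ a b : W, H.Adj a b → (a ∈ U ∧ b ∈ V) ∨ (a ∈ V ∧ b ∈ U))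
    (hUdeg : ∀ u ∈ U, H.degree u = d - 1)
    (hVdeg : ∀ v ∈ V, H.degree v = 2)
    (hforest : (G \ H).IsAcyclic)
    (hcomp : ∀ a ∈ U ∪ V, ∀ b ∈ U ∪ V, (G \ H).Reachable a b → a = b)
    (lam : ℂ) (x : {e : W × W // G.Adj e.1 e.2} → ℂ) (hx : x ≠ 0)
    (heig : nonbacktrackingMatrix G ℂ *ᵥ x = lam • x) :
    ‖lam‖ ≤ Real.sqrt (d - 1) := by
  classical
  set F : SimpleGraph W := G \ H with hFdef
  have hFadj : ∀ a b : W, F.Adj a b ↔ (G.Adj a b ∧ ¬ H.Adj a b) := fun a b =>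
    SimpleGraph.sdiff_adj G H a b
  have hHG : ∀ {a b : W}, H.Adj a b → G.Adj a b := fun h => hsub h
  -- real constants
  have hd3 : (3:ℝ) ≤ (d:ℝ) := by exact_mod_cast hd
  set β : ℝ := Real.sqrt ((d:ℝ) - 1) with hβdef
  have hβsq : β * β = (d:ℝ) - 1 := Real.mul_self_sqrt (by linarith)
  have hβpos : 0 < β := Real.sqrt_pos.mpr (by linarith)
  have hβ1 : 1 < β := by nlinarith
  set q : ℝ := β - 1/(2*β) with hq
  set T : ℝ := 3*β with hT
  have hqpos : 0 < q := by
    rw [hq]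
    have : 1/(2*β) < β := by
      rw [div_lt_iff₀ (by linarith)]
      nlinarith
    linarith
  have hTpos : 0 < T := by rw [hT]; linarith
  -- the geometric weights
  obtain ⟨aw, hawpos, hawle, hawgeom, haw1⟩ : ∃ aw : ℕ → ℝ,
      (∀ k, 0 < aw k) ∧ (∀ k, aw (k+1) ≤ aw 1) ∧
      (∀ k, 1 ≤ k → ((d:ℝ)-1) * aw (k+1) = β * aw k) ∧
      (aw 1 = 1/(2*β*((d:ℝ)-2))) := by
    refine ⟨fun k => (1/(2*β*((d:ℝ)-2))) * (β/((d:ℝ)-1))^(k-1), ?_, ?_, ?_, ?_⟩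
    · intro k
      apply mul_pos
      · apply div_pos one_pos
        nlinarith
      · apply pow_pos
        apply div_pos hβpos
        linarith
    · intro k
      simp only [Nat.add_sub_cancel, Nat.sub_self, pow_zero, mul_one]
      have hc0 : (0:ℝ) ≤ 1/(2*β*((d:ℝ)-2)) := by
        apply le_of_lt; apply div_pos one_pos; nlinarith
      refine mul_le_of_le_one_right hc0 ?_
      apply pow_le_one₀
      · apply div_nonneg hβpos.le; linarith
      · rw [div_le_one (by linarith)]
        nlinarith
    · intro k hk
      obtain ⟨m, rfl⟩ : ∃ m, k = m + 1 := ⟨k - 1, by omega⟩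
      have h1 : m + 1 + 1 - 1 = m + 1 := by omega
      have h2 : m + 1 - 1 = m := by omega
      dsimp only
      rw [h1, h2, pow_succ]
      have hmul : ((d:ℝ)-1) * (β/((d:ℝ)-1)) = β := by
        rw [mul_comm, div_mul_cancel₀ β (show ((d:ℝ)-1) ≠ 0 by linarith)]
      calc ((d:ℝ)-1) * (1/(2*β*((d:ℝ)-2)) * ((β/((d:ℝ)-1))^m * (β/((d:ℝ)-1))))
          = (1/(2*β*((d:ℝ)-2)) * (β/((d:ℝ)-1))^m) * (((d:ℝ)-1) * (β/((d:ℝ)-1))) := by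
            ring
        _ = β * (1/(2*β*((d:ℝ)-2)) * (β/((d:ℝ)-1))^m) := by rw [hmul]; ring
    · simp
  have haw1v : aw 1 = 1/(2*β*((d:ℝ)-2)) := haw1
  have haw1half : aw 1 ≤ 1/2 := by
    rw [haw1v]
    rw [div_le_div_iff₀ (show (0:ℝ) < 2*β*((d:ℝ)-2) by nlinarith)
      (show (0:ℝ) < 2 by norm_num)]
    nlinarith
  have hfrac : ((d:ℝ)-2) * aw 1 = 1/(2*β) := by
    rw [haw1v, mul_one_div, div_eq_div_iff (by nlinarith) (by nlinarith)]
    ring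
  -- the root and depth functions
  obtain ⟨dep, hdep0, hdepadj, hdeppar⟩ : ∃ dep : W → ℕ,
      (∀ c ∈ U ∪ V, dep c = 0) ∧
      (∀ a b : W, F.Adj a b → dep b = dep a + 1 ∨ dep a = dep b + 1) ∧
      (∀ v x y : W, F.Adj v x → F.Adj v y → dep x + 1 = dep v → dep y + 1 = dep v →
        x = y) := by
    set root : W → W := fun c =>
      if h : ∃ s, s ∈ U ∪ V ∧ F.Reachable c s then h.choose
      else (F.connectedComponentMk c).out with hroot
    have hr1 : ∀ c, F.Reachable c (root c) := by
      intro c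
      rw [hroot]
      by_cases h : ∃ s, s ∈ U ∪ V ∧ F.Reachable c s
      · simp only [dif_pos h]; exact h.choose_spec.2
      · simp only [dif_neg h]
        have := (F.connectedComponentMk c).out_eq
        exact ((SimpleGraph.ConnectedComponent.eq).mp this).symm
    have hr2 : ∀ c c', F.Reachable c c' → root c = root c' := by
      intro c c' hcc
      rw [hroot]
      by_cases h : ∃ s, s ∈ U ∪ V ∧ F.Reachable c s
      · have h' : ∃ s, s ∈ U ∪ V ∧ F.Reachable c' s :=
          ⟨h.choose, h.choose_spec.1, hcc.symm.trans h.choose_spec.2⟩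
        simp only [dif_pos h, dif_pos h']
        exact hcomp _ h.choose_spec.1 _ h'.choose_spec.1
          (h.choose_spec.2.symm.trans (hcc.trans h'.choose_spec.2))
      · have h' : ¬ ∃ s, s ∈ U ∪ V ∧ F.Reachable c' s := by
          rintro ⟨s, hs, hrs⟩
          exact h ⟨s, hs, hcc.trans hrs⟩
        simp only [dif_neg h, dif_neg h']
        congr 1
        exact SimpleGraph.ConnectedComponent.sound hcc
    have hr3 : ∀ c ∈ U ∪ V, root c = c := by
      intro c hc
      rw [hroot]
      have h : ∃ s, s ∈ U ∪ V ∧ F.Reachable c s := ⟨c, hc, SimpleGraph.Reachable.refl c⟩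
      simp only [dif_pos h]
      exact (hcomp c hc _ h.choose_spec.1 h.choose_spec.2).symm
    refine ⟨fun c => F.dist c (root c), ?_, ?_, ?_⟩
    · intro c hc
      dsimp only
      rw [hr3 c hc]
      exact SimpleGraph.dist_self
    · intro a b hab
      have hre : root a = root b := hr2 a b hab.reachable
      have := forest_step hforest hab (hr1 a)
      dsimp only
      rw [hre] at this ⊢
      exact this
    · intro v y z hvy hvz h1 h2
      dsimp only at h1 h2
      have hry : root y = root v := hr2 y v hvy.symm.reachable
      have hrz : root z = root v := hr2 z v hvz.symm.reachable
      rw [hry] at h1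
      rw [hrz] at h2
      refine forest_parent_unique hforest hvy hvz ?_ ?_ h1 h2
      · have := hr1 y; rwa [hry] at this
      · have := hr1 z; rwa [hrz] at this
  -- the weight function
  obtain ⟨w, hwpos, hwHU, hwHnU, hwFto, hwFaw⟩ : ∃ w : W → W → ℝ,
      (∀ a b, 0 < w a b) ∧
      (∀ a b, H.Adj a b → a ∈ U → w a b = 1) ∧
      (∀ a b, H.Adj a b → a ∉ U → w a b = q) ∧
      (∀ a b, ¬ H.Adj a b → dep b < dep a → w a b = T) ∧
      (∀ a b, ¬ H.Adj a b → ¬ dep b < dep a → w a b = aw (dep b)) := by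
    refine ⟨fun u v => if H.Adj u v then (if u ∈ U then 1 else q)
      else (if dep v < dep u then T else aw (dep v)), ?_, ?_, ?_, ?_, ?_⟩
    · intro a b
      dsimp only
      split_ifs
      · norm_num
      · exact hqpos
      · exact hTpos
      · exact hawpos _
    · intro a b h1 h2; simp [h1, h2]
    · intro a b h1 h2; simp [h1, h2]
    · intro a b h1 h2; simp [h1, h2]
    · intro a b h1 h2; simp [h1, h2]
  -- helper facts about depths around special vertices
  have hdep_special_nbr : ∀ v x : W, v ∈ U ∪ V → F.Adj v x → dep x = 1 := by
    intro v xx hv hadj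
    have h0 : dep v = 0 := hdep0 v hv
    rcases hdepadj v xx hadj with h | h
    · omega
    · omega
  -- THE ROW BOUND
  have hbT : β * T = 3*((d:ℝ)-1) := by
    rw [hT, show β*(3*β) = 3*(β*β) from by ring, hβsq]
  have hbq : β * q = ((d:ℝ)-1) - 1/2 := by
    have hhalf : β * (1/(2*β)) = 1/2 := by
      rw [mul_one_div, div_eq_div_iff (by linarith) (by norm_num)]
      ring
    rw [hq, mul_sub, hhalf, hβsq]
  -- THE ROW BOUND
  have hrow : ∀ u v : W, G.Adj u v →
      (∑ z ∈ (G.neighborFinset v).erase u, w v z) ≤ β * w u v := by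
    intro u v huv
    have hunion : G.neighborFinset v = H.neighborFinset v ∪ F.neighborFinset v := by
      ext z
      simp only [Finset.mem_union, SimpleGraph.mem_neighborFinset, hFadj]
      constructor
      · intro h
        by_cases hH : H.Adj v z
        · exact Or.inl hH
        · exact Or.inr ⟨h, hH⟩
      · rintro (h | h)
        · exact hHG h
        · exact h.1
    have hdisj0 : Disjoint (H.neighborFinset v) (F.neighborFinset v) := by
      rw [Finset.disjoint_left]
      intro z hz1 hz2
      rw [SimpleGraph.mem_neighborFinset] at hz1 hz2
      exact ((hFadj v z).mp hz2).2 hz1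
    have hdisj : Disjoint ((H.neighborFinset v).erase u) ((F.neighborFinset v).erase u) :=
      hdisj0.mono (Finset.erase_subset u _) (Finset.erase_subset u _)
    have hsplit : (G.neighborFinset v).erase u
        = ((H.neighborFinset v).erase u) ∪ ((F.neighborFinset v).erase u) := by
      rw [hunion, Finset.erase_union_distrib]
    rw [hsplit, Finset.sum_union hdisj]
    have hcardG : (H.neighborFinset v).card + (F.neighborFinset v).card ≤ d := by
      rw [← Finset.card_union_of_disjoint hdisj0, ← hunion,
        SimpleGraph.card_neighborFinset_eq_degree]
      exact hmaxdeg v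
    by_cases hvV : v ∈ V
    · -- v has H-degree 2, all H-successors have weight q, F-successors weight aw 1
      have hvnU : v ∉ U := fun h => (Set.disjoint_left.mp hUV h) hvV
      have hHdeg : (H.neighborFinset v).card = 2 := by
        rw [SimpleGraph.card_neighborFinset_eq_degree]; exact hVdeg v hvV
      have hdv : dep v = 0 := hdep0 v (Or.inr hvV)
      have hHw : ∀ z ∈ (H.neighborFinset v).erase u, w v z = q := by
        intro z hz
        have hzH : H.Adj v z := by
          have := Finset.mem_of_mem_erase hz
          rwa [SimpleGraph.mem_neighborFinset] at this
        exact hwHnU v z hzH hvnU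
      have hFw : ∀ z ∈ (F.neighborFinset v).erase u, w v z = aw 1 := by
        intro z hz
        have hzF : F.Adj v z := by
          have := Finset.mem_of_mem_erase hz
          rwa [SimpleGraph.mem_neighborFinset] at this
        have hdz : dep z = 1 := hdep_special_nbr v z (Or.inr hvV) hzF
        rw [hwFaw v z ((hFadj v z).mp hzF).2 (by omega), hdz]
      have hFcard : (((F.neighborFinset v).erase u).card : ℝ) ≤ (d:ℝ) - 2 := by
        have h1 : ((F.neighborFinset v).erase u).card + 2 ≤ d := by
          have h2 := Finset.card_erase_le (s := F.neighborFinset v) (a := u)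
          omega
        have := (Nat.cast_le (α := ℝ)).mpr h1
        push_cast at this
        linarith
      have hFsum : ∑ z ∈ (F.neighborFinset v).erase u, w v z ≤ ((d:ℝ) - 2) * aw 1 := by
        rw [Finset.sum_congr rfl hFw, Finset.sum_const, nsmul_eq_mul]
        exact mul_le_mul_of_nonneg_right hFcard (hawpos 1).le
      by_cases hHu : H.Adj v u
      · -- e is an H-edge from U to V
        have huU : u ∈ U := by
          rcases hbip u v hHu.symm with ⟨h1, _⟩ | ⟨_, h2⟩
          · exact h1
          · exact absurd h2 hvnU
        rw [hwHU u v hHu.symm huU]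
        have hHcard : ((H.neighborFinset v).erase u).card = 1 := by
          rw [Finset.card_erase_of_mem
            ((SimpleGraph.mem_neighborFinset _ _ _).mpr hHu), hHdeg]
        have hHsum : ∑ z ∈ (H.neighborFinset v).erase u, w v z = q := by
          rw [Finset.sum_congr rfl hHw, Finset.sum_const, hHcard, one_nsmul]
        rw [hHsum]
        calc q + ∑ z ∈ (F.neighborFinset v).erase u, w v z
            ≤ q + ((d:ℝ)-2) * aw 1 := by linarith [hFsum]
          _ = q + 1/(2*β) := by rw [hfrac]
          _ = β := by rw [hq]; ring
          _ = β * 1 := by ring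
      · -- e is a forest edge arriving at the special vertex v
        have hFvu : F.Adj v u := (hFadj v u).mpr ⟨huv.symm, hHu⟩
        have hdu : dep u = 1 := hdep_special_nbr v u (Or.inr hvV) hFvu
        rw [hwFto u v (fun h => hHu h.symm) (by omega)]
        have hHsum : ∑ z ∈ (H.neighborFinset v).erase u, w v z ≤ 2 * q := by
          rw [Finset.sum_congr rfl hHw, Finset.sum_const, nsmul_eq_mul]
          have h1 : (((H.neighborFinset v).erase u).card : ℝ) ≤ 2 := by
            have h2 := Finset.card_erase_le (s := H.neighborFinset v) (a := u)
            have h3 : ((H.neighborFinset v).erase u).card ≤ 2 := by omega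
            exact_mod_cast h3
          exact mul_le_mul_of_nonneg_right h1 hqpos.le
        have h5 : 2*q + ((d:ℝ)-2) * aw 1 ≤ β * T := by
          rw [hbT, hfrac, hq]
          have h6 : 0 < 1/(2*β) := by positivity
          nlinarith
        linarith [hFsum, hHsum]
    · by_cases hvU : v ∈ U
      · -- v ∈ U : H-degree d-1, H-successors weight 1, F-successors weight aw 1
        have hHdeg : (H.neighborFinset v).card = d - 1 := by
          rw [SimpleGraph.card_neighborFinset_eq_degree]; exact hUdeg v hvU
        have hdv : dep v = 0 := hdep0 v (Or.inl hvU)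
        have hHw : ∀ z ∈ (H.neighborFinset v).erase u, w v z = 1 := by
          intro z hz
          have hzH : H.Adj v z := by
            have := Finset.mem_of_mem_erase hz
            rwa [SimpleGraph.mem_neighborFinset] at this
          exact hwHU v z hzH hvU
        have hFw : ∀ z ∈ (F.neighborFinset v).erase u, w v z = aw 1 := by
          intro z hz
          have hzF : F.Adj v z := by
            have := Finset.mem_of_mem_erase hz
            rwa [SimpleGraph.mem_neighborFinset] at this
          have hdz : dep z = 1 := hdep_special_nbr v z (Or.inl hvU) hzF
          rw [hwFaw v z ((hFadj v z).mp hzF).2 (by omega), hdz]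
        have hFcard : (((F.neighborFinset v).erase u).card : ℝ) ≤ 1 := by
          have h1 : ((F.neighborFinset v).erase u).card ≤ 1 := by
            have h2 := Finset.card_erase_le (s := F.neighborFinset v) (a := u)
            omega
          exact_mod_cast h1
        have hFsum : ∑ z ∈ (F.neighborFinset v).erase u, w v z ≤ aw 1 := by
          rw [Finset.sum_congr rfl hFw, Finset.sum_const, nsmul_eq_mul]
          have := mul_le_mul_of_nonneg_right hFcard (hawpos 1).le
          linarith
        by_cases hHu : H.Adj v u
        · -- H-edge from V to U
          have huV : u ∈ V := by
            rcases hbip u v hHu.symm with ⟨_, h2⟩ | ⟨h1, _⟩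
            · exact absurd h2 hvV
            · exact h1
          have hunU : u ∉ U := fun h => (Set.disjoint_left.mp hUV h) huV
          rw [hwHnU u v hHu.symm hunU]
          have hHcard : (((H.neighborFinset v).erase u).card : ℝ) = (d:ℝ) - 2 := by
            rw [Finset.card_erase_of_mem
              ((SimpleGraph.mem_neighborFinset _ _ _).mpr hHu), hHdeg]
            have h1 : d - 1 - 1 + 2 = d := by omega
            have := (Nat.cast_inj (R := ℝ)).mpr h1
            push_cast at this
            linarith
          have hHsum : ∑ z ∈ (H.neighborFinset v).erase u, w v z = (d:ℝ) - 2 := by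
            rw [Finset.sum_congr rfl hHw, Finset.sum_const, nsmul_eq_mul, mul_one, hHcard]
          rw [hHsum]
          rw [hbq]
          linarith [hFsum, haw1half]
        · -- forest edge arriving at the special vertex v ∈ U
          have hFvu : F.Adj v u := (hFadj v u).mpr ⟨huv.symm, hHu⟩
          have hdu : dep u = 1 := hdep_special_nbr v u (Or.inl hvU) hFvu
          rw [hwFto u v (fun h => hHu h.symm) (by omega), hbT]
          have hHsum : ∑ z ∈ (H.neighborFinset v).erase u, w v z ≤ (d:ℝ) - 1 := by
            rw [Finset.sum_congr rfl hHw, Finset.sum_const, nsmul_eq_mul, mul_one]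
            have h1 : ((H.neighborFinset v).erase u).card + 1 ≤ d := by
              have h2 := Finset.card_erase_le (s := H.neighborFinset v) (a := u)
              omega
            have := (Nat.cast_le (α := ℝ)).mpr h1
            push_cast at this
            linarith
          linarith [hFsum, haw1half, hd3]
      · -- v is not special: all edges at v are forest edges
        have hvS : v ∉ U ∪ V := fun h => h.elim hvU hvV
        have hHempty : (H.neighborFinset v) = ∅ := by
          ext z
          simp only [SimpleGraph.mem_neighborFinset, Finset.notMem_empty, iff_false]
          intro h
          rcases hbip v z h with ⟨h1, _⟩ | ⟨h1, _⟩
          · exact hvU h1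
          · exact hvV h1
        have hHsum : ∑ z ∈ (H.neighborFinset v).erase u, w v z = 0 := by
          rw [hHempty]
          simp
        rw [hHsum, zero_add]
        have hHnuv : ¬ H.Adj u v := by
          intro h
          rcases hbip u v h with ⟨_, h2⟩ | ⟨_, h2⟩
          · exact hvV h2
          · exact hvU h2
        have hFuv : F.Adj u v := (hFadj u v).mpr ⟨huv, hHnuv⟩
        have hFcard : (((F.neighborFinset v).erase u).card : ℝ) ≤ (d:ℝ) - 1 := by
          have h1 : ((F.neighborFinset v).erase u).card + 1 ≤ d := by
            have h2 : u ∈ F.neighborFinset v :=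
              (SimpleGraph.mem_neighborFinset _ _ _).mpr hFuv.symm
            have h3 := Finset.card_erase_of_mem h2
            have h4 : 1 ≤ (F.neighborFinset v).card := Finset.card_pos.mpr ⟨u, h2⟩
            omega
          have := (Nat.cast_le (α := ℝ)).mpr h1
          push_cast at this
          linarith
        rcases hdepadj u v hFuv with haway | htow
        · -- the edge points away from the root
          rw [hwFaw u v hHnuv (by omega)]
          have hsucc : ∀ z ∈ (F.neighborFinset v).erase u, w v z = aw (dep v + 1) := by
            intro z hz
            have hzu : z ≠ u := (Finset.mem_erase.mp hz).1
            have hzF : F.Adj v z := by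
              have := Finset.mem_of_mem_erase hz
              rwa [SimpleGraph.mem_neighborFinset] at this
            have hdz : dep z = dep v + 1 := by
              rcases hdepadj v z hzF with h | h
              · exact h
              · exact absurd (hdeppar v z u hzF hFuv.symm (by omega) (by omega)) hzu
            rw [hwFaw v z ((hFadj v z).mp hzF).2 (by omega), hdz]
          rw [Finset.sum_congr rfl hsucc, Finset.sum_const, nsmul_eq_mul]
          calc (((F.neighborFinset v).erase u).card : ℝ) * aw (dep v + 1)
              ≤ ((d:ℝ) - 1) * aw (dep v + 1) :=
                mul_le_mul_of_nonneg_right hFcard (hawpos _).le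
            _ = β * aw (dep v) := hawgeom (dep v) (by omega)
        · -- the edge points towards the root
          rw [hwFto u v hHnuv (by omega), hbT]
          rw [← Finset.sum_filter_add_sum_filter_not ((F.neighborFinset v).erase u)
            (fun z => dep z < dep v) (w v)]
          have hPsum : ∑ z ∈ ((F.neighborFinset v).erase u).filter (fun z => dep z < dep v),
              w v z ≤ T := by
            have hPw : ∀ z ∈ ((F.neighborFinset v).erase u).filter (fun z => dep z < dep v),
                w v z = T := by
              intro z hz
              obtain ⟨hz1, hz2⟩ := Finset.mem_filter.mp hz
              have hzF : F.Adj v z := by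
                have := Finset.mem_of_mem_erase hz1
                rwa [SimpleGraph.mem_neighborFinset] at this
              exact hwFto v z ((hFadj v z).mp hzF).2 hz2
            have hPcard : (((F.neighborFinset v).erase u).filter
                (fun z => dep z < dep v)).card ≤ 1 := by
              rw [Finset.card_le_one]
              intro z1 hz1 z2 hz2
              obtain ⟨hm1, hlt1⟩ := Finset.mem_filter.mp hz1
              obtain ⟨hm2, hlt2⟩ := Finset.mem_filter.mp hz2
              have hzF1 : F.Adj v z1 := by
                have := Finset.mem_of_mem_erase hm1
                rwa [SimpleGraph.mem_neighborFinset] at this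
              have hzF2 : F.Adj v z2 := by
                have := Finset.mem_of_mem_erase hm2
                rwa [SimpleGraph.mem_neighborFinset] at this
              have hp1 : dep z1 + 1 = dep v := by
                rcases hdepadj v z1 hzF1 with h | h <;> omega
              have hp2 : dep z2 + 1 = dep v := by
                rcases hdepadj v z2 hzF2 with h | h <;> omega
              exact hdeppar v z1 z2 hzF1 hzF2 hp1 hp2
            rw [Finset.sum_congr rfl hPw, Finset.sum_const, nsmul_eq_mul]
            have h1 : ((((F.neighborFinset v).erase u).filter
                (fun z => dep z < dep v)).card : ℝ) ≤ 1 := by exact_mod_cast hPcard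
            nlinarith [hTpos]
          have hCsum : ∑ z ∈ ((F.neighborFinset v).erase u).filter
              (fun z => ¬ dep z < dep v), w v z ≤ ((d:ℝ) - 1) * aw 1 := by
            have hCw : ∀ z ∈ ((F.neighborFinset v).erase u).filter
                (fun z => ¬ dep z < dep v), w v z ≤ aw 1 := by
              intro z hz
              obtain ⟨hz1, hz2⟩ := Finset.mem_filter.mp hz
              have hzF : F.Adj v z := by
                have := Finset.mem_of_mem_erase hz1
                rwa [SimpleGraph.mem_neighborFinset] at this
              have hdz : dep z = dep v + 1 := by
                rcases hdepadj v z hzF with h | h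
                · exact h
                · omega
              rw [hwFaw v z ((hFadj v z).mp hzF).2 hz2, hdz]
              exact hawle (dep v)
            have hCcard : ((((F.neighborFinset v).erase u).filter
                (fun z => ¬ dep z < dep v)).card : ℝ) ≤ (d:ℝ) - 1 := by
              refine le_trans ?_ hFcard
              have := Finset.card_filter_le ((F.neighborFinset v).erase u)
                (fun z => ¬ dep z < dep v)
              exact_mod_cast this
            calc ∑ z ∈ ((F.neighborFinset v).erase u).filter (fun z => ¬ dep z < dep v), w v z
                ≤ ∑ _z ∈ ((F.neighborFinset v).erase u).filter
                    (fun z => ¬ dep z < dep v), aw 1 := Finset.sum_le_sum hCw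
              _ = ((((F.neighborFinset v).erase u).filter
                    (fun z => ¬ dep z < dep v)).card : ℝ) * aw 1 := by
                  rw [Finset.sum_const, nsmul_eq_mul]
              _ ≤ ((d:ℝ) - 1) * aw 1 :=
                  mul_le_mul_of_nonneg_right hCcard (hawpos 1).le
          have hkey : T + ((d:ℝ)-1) * aw 1 ≤ 3*((d:ℝ)-1) := by
            have h1 : ((d:ℝ)-1) * aw 1 ≤ 1 := by
              rw [haw1v, mul_one_div, div_le_one (by nlinarith)]
              nlinarith
            rw [hT]
            nlinarith [hβsq, sq_nonneg (β-1)]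
          linarith [hPsum, hCsum]
  -- conclude via the weighted sup-norm bound
  have hmain := linf_eig_bound (nonbacktrackingMatrix G ℂ)
      (fun e => w (e : W × W).1 (e : W × W).2)
      (fun e => hwpos _ _) β
      (fun e => by
        rw [nb_row_sum G w e]
        exact hrow (e : W × W).1 (e : W × W).2 e.2)
      lam x hx heig
  exact hmain
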